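/- For a fixed integer t ≥ 2, among all positive integers k, the quantity c(k) defined by c(k) = 1/(2k) if k/gcd(k,t) is odd, c(k) = √(1+3·gcd(k,t)²)/k if k/gcd(k,t) ≡ 2 (mod 4), and c(k) = 1/k if 4 divides k/gcd(k,t), attains its unique maximum at k = 2^{s+1}, where 2^s is the exact power of 2 dividing t; the maximum value is √(1+3·4^s)/2^{s+1}. -/

import Mathlib

/-- The growth rate `c(k)` of the Bessel argument in the Rademacher expansion of `A_t(n)`. -/
noncomputable def besselRate (t k : ℕ) : ℝ :=
  if (k / Nat.gcd k t) % 2 = 1 then 1 / (2 * k)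
  else if (k / Nat.gcd k t) % 4 = 2 then Real.sqrt (1 + 3 * (Nat.gcd k t : ℝ) ^ 2) / k
  else 1 / k

private lemma half_lt_M (s : ℕ) : (1 : ℝ) / 2 < Real.sqrt (1 + 3 * 4 ^ s) / 2 ^ (s + 1) := by
  have h4 : ((2 : ℝ) ^ s) ^ 2 = 4 ^ s := by
    rw [show (4 : ℝ) = 2 ^ 2 by norm_num, ← pow_mul, ← pow_mul, Nat.mul_comm]
  have hlt : (2 : ℝ) ^ s < Real.sqrt (1 + 3 * 4 ^ s) := by
    apply (Real.lt_sqrt (by positivity)).mpr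
    have h4pos : (0 : ℝ) < 4 ^ s := by positivity
    rw [h4]; linarith
  have heq : (1 : ℝ) / 2 = 2 ^ s / 2 ^ (s + 1) := by
    rw [pow_succ]; field_simp
  rw [heq]
  gcongr

theorem stmt15 (t s ℓ : ℕ) (ht : 2 ≤ t) (htfac : t = 2 ^ s * ℓ) (hℓ : Odd ℓ) :
    besselRate t (2 ^ (s + 1)) = Real.sqrt (1 + 3 * 4 ^ s) / 2 ^ (s + 1) ∧
    ∀ k : ℕ, 1 ≤ k → k ≠ 2 ^ (s + 1) → besselRate t k < besselRate t (2 ^ (s + 1)) := by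
  have hgcd : Nat.gcd (2 ^ (s + 1)) t = 2 ^ s := by
    rw [htfac, pow_succ, Nat.gcd_mul_left]
    have : Nat.gcd 2 ℓ = 1 := Nat.coprime_two_left.mpr hℓ
    rw [this, Nat.mul_one]
  have hdiv : 2 ^ (s + 1) / Nat.gcd (2 ^ (s + 1)) t = 2 := by
    rw [hgcd, pow_succ, Nat.mul_div_cancel_left _ (by positivity)]
  have h4R : (((2 : ℕ) ^ s : ℕ) : ℝ) ^ 2 = 4 ^ s := by
    push_cast
    rw [show (4 : ℝ) = 2 ^ 2 by norm_num, ← pow_mul, ← pow_mul, Nat.mul_comm]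
  have hpart1 : besselRate t (2 ^ (s + 1)) = Real.sqrt (1 + 3 * 4 ^ s) / 2 ^ (s + 1) := by
    rw [besselRate, hdiv]
    norm_num
    rw [hgcd, h4R]
  refine ⟨hpart1, ?_⟩
  intro k hk1 hne
  rw [hpart1]
  set g := Nat.gcd k t with hg
  have hkpos : 0 < k := hk1
  have hgpos : 0 < g := Nat.gcd_pos_of_pos_left t hkpos
  have hgk : g ∣ k := Nat.gcd_dvd_left k t
  have hgt : g ∣ t := Nat.gcd_dvd_right k t
  set k₀ := k / g with hk₀
  have hkeq : g * k₀ = k := Nat.mul_div_cancel' hgk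
  have hk₀pos : 0 < k₀ := Nat.div_pos (Nat.le_of_dvd hkpos hgk) hgpos
  -- Key: if k₀ is even then 2^s ∣ g
  have key : 2 ∣ k₀ → 2 ^ s ∣ g := by
    intro h2
    obtain ⟨m, hm⟩ := h2
    have h2g : 2 * g ∣ k := ⟨m, by rw [← hkeq, hm]; ring⟩
    have aux : ∀ j, j ≤ s → 2 ^ j ∣ g := by
      intro j hj
      induction j with
      | zero => simp
      | succ j ih =>
        have h1 : 2 ^ j ∣ g := ih (Nat.le_of_succ_le hj)
        have hk2 : 2 ^ (j + 1) ∣ k := by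
          calc 2 ^ (j + 1) = 2 * 2 ^ j := by ring
          _ ∣ 2 * g := mul_dvd_mul_left 2 h1
          _ ∣ k := h2g
        have ht2 : 2 ^ (j + 1) ∣ t := by
          rw [htfac]
          exact Dvd.dvd.mul_right (pow_dvd_pow 2 hj) ℓ
        exact Nat.dvd_gcd hk2 ht2
    exact aux s le_rfl
  rw [besselRate]
  have hMhalf := half_lt_M s
  have hkR : (1 : ℝ) ≤ (k : ℝ) := by exact_mod_cast hk1
  split_ifs with h1 h2
  all_goals first
    | (have h1' : k₀ % 2 ≠ 1 := h1; have h2' : k₀ % 4 = 2 := h2)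
    | (have h1' : k₀ % 2 ≠ 1 := h1; have h2' : k₀ % 4 ≠ 2 := h2)
    | skip
  · -- k₀ odd : 1/(2k) ≤ 1/2 < M
    refine lt_of_le_of_lt ?_ hMhalf
    rw [div_le_div_iff₀ (by positivity) (by norm_num)]
    linarith
  · -- k₀ ≡ 2 (mod 4)
    have h2div : 2 ∣ k₀ := by omega
    have hsg : 2 ^ s ∣ g := key h2div
    have hgR : ((2 : ℝ) ^ s) ≤ (g : ℝ) := by
      exact_mod_cast Nat.cast_le.mpr (Nat.le_of_dvd hgpos hsg)
    have hp : (0 : ℝ) < 2 ^ s := by positivity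
    have hgRpos : (0 : ℝ) < g := by exact_mod_cast hgpos
    have hkRpos : (0 : ℝ) < k := by exact_mod_cast hkpos
    have hA : (0 : ℝ) ≤ 1 + 3 * (g : ℝ) ^ 2 := by positivity
    have hB : (0 : ℝ) ≤ 1 + 3 * (4 : ℝ) ^ s := by positivity
    rw [div_lt_div_iff₀ hkRpos (by positivity : (0:ℝ) < 2 ^ (s+1))]
    have e1 : Real.sqrt (1 + 3 * (g : ℝ) ^ 2) * 2 ^ (s + 1)
        = Real.sqrt ((1 + 3 * (g : ℝ) ^ 2) * (2 ^ (s + 1)) ^ 2) := by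
      rw [Real.sqrt_mul hA, Real.sqrt_sq (by positivity)]
    have e2 : Real.sqrt (1 + 3 * (4 : ℝ) ^ s) * k
        = Real.sqrt ((1 + 3 * (4 : ℝ) ^ s) * (k : ℝ) ^ 2) := by
      rw [Real.sqrt_mul hB, Real.sqrt_sq (by positivity)]
    rw [e1, e2]
    apply Real.sqrt_lt_sqrt (by positivity)
    -- numeric inequality
    have h4s : ((2 : ℝ) ^ s) ^ 2 = 4 ^ s := by
      rw [show (4 : ℝ) = 2 ^ 2 by norm_num, ← pow_mul, ← pow_mul, Nat.mul_comm]
    have hkRe : (k : ℝ) = (g : ℝ) * (k₀ : ℝ) := by exact_mod_cast hkeq.symm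
    have hpows : ((2 : ℝ) ^ (s + 1)) ^ 2 = 4 * ((2:ℝ) ^ s) ^ 2 := by
      rw [pow_succ]; ring
    by_cases hk2 : k₀ = 2
    · -- then g ≠ 2^s, so 2^s < g
      have hgne : g ≠ 2 ^ s := by
        intro h
        apply hne
        rw [← hkeq, h, hk2, pow_succ]
      have hglt : (2 : ℕ) ^ s < g := lt_of_le_of_ne (Nat.le_of_dvd hgpos hsg) (Ne.symm hgne)
      have hgltR : (2 : ℝ) ^ s < (g : ℝ) := by exact_mod_cast hglt
      have hsq : ((2:ℝ) ^ s) ^ 2 < (g : ℝ) ^ 2 := by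
        apply pow_lt_pow_left₀ hgltR (by positivity)
        norm_num
      rw [hkRe, hk2, hpows, ← h4s]
      push_cast
      nlinarith [hsq, hp, hgRpos]
    · have hk6 : 6 ≤ k₀ := by omega
      have hk6R : (6 : ℝ) ≤ (k₀ : ℝ) := by exact_mod_cast hk6
      have hsq : ((2:ℝ) ^ s) ^ 2 ≤ (g : ℝ) ^ 2 := by
        apply pow_le_pow_left₀ (by positivity) hgR
      have h36 : (36 : ℝ) ≤ (k₀ : ℝ) ^ 2 := by nlinarith
      have hA1 : 36 * (g : ℝ) ^ 2 ≤ (g : ℝ) ^ 2 * (k₀ : ℝ) ^ 2 := by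
        nlinarith [mul_le_mul_of_nonneg_left h36 (sq_nonneg (g : ℝ))]
      have hA2 : 36 * (((2:ℝ) ^ s) ^ 2 * (g : ℝ) ^ 2) ≤ ((2:ℝ)^s) ^ 2 * (g : ℝ) ^ 2 * (k₀ : ℝ) ^ 2 := by
        have := mul_le_mul_of_nonneg_left h36
          (by positivity : (0:ℝ) ≤ ((2:ℝ)^s) ^ 2 * (g : ℝ) ^ 2)
        linarith
      have hg2 : (0:ℝ) < (g : ℝ) ^ 2 := by positivity
      rw [hkRe, hpows, ← h4s]
      have expand : (1 + 3 * (g:ℝ) ^ 2) * (4 * ((2:ℝ) ^ s) ^ 2)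
          = 4 * ((2:ℝ)^s) ^ 2 + 12 * (((2:ℝ)^s) ^ 2 * (g:ℝ) ^ 2) := by ring
      have expand2 : (1 + 3 * ((2:ℝ)^s) ^ 2) * ((g:ℝ) * (k₀:ℝ)) ^ 2
          = (g:ℝ) ^ 2 * (k₀:ℝ) ^ 2 + 3 * (((2:ℝ)^s) ^ 2 * (g:ℝ) ^ 2 * (k₀:ℝ) ^ 2) := by ring
      have hw : (0:ℝ) ≤ ((2:ℝ)^s) ^ 2 * (g:ℝ) ^ 2 := by positivity
      rw [expand, expand2]
      linarith
  · -- 4 ∣ k₀ (k₀ even), so k even, k ≥ 2 : 1/k ≤ 1/2 < M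
    have h2div : 2 ∣ k₀ := by omega
    have hk2 : 2 ≤ k := by
      obtain ⟨m, hm⟩ := h2div
      have : 2 ∣ k := by rw [← hkeq, hm]; exact ⟨g * m, by ring⟩
      omega
    refine lt_of_le_of_lt ?_ hMhalf
    rw [div_le_div_iff₀ (by positivity) (by norm_num)]
    have : (2 : ℝ) ≤ (k : ℝ) := by exact_mod_cast hk2
    linarith
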